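/- Let R be a locally bounded k-category with ordinary quiver Q, and g, h automorphisms of R coinciding on objects. Then the following are equivalent: (1) there is a map ρ: Obj(R) → k^× with ρ(y)g(f) = h(f)ρ(x) for all f ∈ R(x,y); (2) (a) for each arrow α: x → y of Q there is c_{x,y} ∈ k^× with (g^{-1}h)(ᾱ) = c_{x,y}·ᾱ, and (b) for every cycle C in Q, the product (g^{-1}h)_C of the scalars along C (inverting on inverse arrows) equals 1. -/

import Mathlib

open CategoryTheory

/-- A letter of the double quiver: an arrow together with an orientation
(`true` = the arrow itself, `false` = its formal inverse). -/
abbrev Letter (A : Type) := A × Bool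

variable {V A : Type}

/-- Source of a letter of the double quiver. -/
def lsrc (s t : A → V) (l : Letter A) : V := if l.2 then s l.1 else t l.1

/-- Target of a letter of the double quiver. -/
def ltgt (s t : A → V) (l : Letter A) : V := if l.2 then t l.1 else s l.1

/-- A walk in the quiver `(V, A, s, t)`, written in order of traversal. -/
def IsWalk (s t : A → V) (w : List (Letter A)) : Prop :=
  w.Chain' fun p q => ltgt s t p = lsrc s t q

/-- A cycle: a nonempty walk whose endpoint is its starting point. -/
def IsCycle (s t : A → V) (w : List (Letter A)) : Prop :=
  w ≠ [] ∧ IsWalk s t w ∧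
    ∀ a ∈ w.head?, ∀ b ∈ w.getLast?, ltgt s t b = lsrc s t a

/-- The multiplicative value of a family of units on a walk, inverting on
inverse letters. -/
def wval {k : Type} [Field k] (φ : A → kˣ) (w : List (Letter A)) : kˣ :=
  (w.map fun l => if l.2 then φ l.1 else (φ l.1)⁻¹).prod

section Aux

variable {k : Type} [Field k] (s t : A → V) (φ : A → kˣ)

def lval (l : Letter A) : kˣ := if l.2 then φ l.1 else (φ l.1)⁻¹

lemma wval_eq (w : List (Letter A)) : wval φ w = (w.map (lval φ)).prod := rfl

def linv (l : Letter A) : Letter A := (l.1, !l.2)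

lemma lsrc_linv (l : Letter A) : lsrc s t (linv l) = ltgt s t l := by
  cases l with | mk a b => cases b <;> simp [lsrc, ltgt, linv]

lemma ltgt_linv (l : Letter A) : ltgt s t (linv l) = lsrc s t l := by
  cases l with | mk a b => cases b <;> simp [lsrc, ltgt, linv]

lemma lval_linv (l : Letter A) : lval φ (linv l) = (lval φ l)⁻¹ := by
  cases l with | mk a b => cases b <;> simp [lval, linv]

inductive Conn (s t : A → V) (φ : A → kˣ) : V → V → kˣ → Prop
  | refl (x : V) : Conn s t φ x x 1
  | tail {x : V} {u : kˣ} (l : Letter A) :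
      Conn s t φ x (lsrc s t l) u → Conn s t φ x (ltgt s t l) (u * lval φ l)

variable {s t φ}

lemma Conn.cast {x y : V} {u v : kˣ} (h : Conn s t φ x y u) (e : u = v) :
    Conn s t φ x y v := e ▸ h

lemma Conn.trans' {y z : V} {v : kˣ} (h2 : Conn s t φ y z v) :
    ∀ {x : V} {u : kˣ}, Conn s t φ x y u → Conn s t φ x z (u * v) := by
  induction h2 with
  | refl => intro x u h; exact h.cast (mul_one u).symm
  | tail l h ih =>
      intro x u h1
      exact ((ih h1).tail l).cast (mul_assoc _ _ _)

lemma Conn.symm {x y : V} {u : kˣ} (h : Conn s t φ x y u) :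
    Conn s t φ y x u⁻¹ := by
  induction h with
  | refl => exact (Conn.refl _).cast (by simp)
  | tail l h ih =>
      have step : Conn s t φ (ltgt s t l) (lsrc s t l) (1 * lval φ (linv l)) := by
        have h0 : Conn s t φ (lsrc s t (linv l)) (lsrc s t (linv l)) (1 : kˣ) :=
          Conn.refl _
        have h1 := h0.tail (linv l)
        rwa [lsrc_linv, ltgt_linv] at h1
      exact (ih.trans' step).cast (by rw [lval_linv, one_mul, mul_inv_rev])

lemma conn_to_walk {x y : V} {u : kˣ} (h : Conn s t φ x y u) :
    ∃ w : List (Letter A), IsWalk s t w ∧ (w = [] → x = y) ∧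
      (∀ a ∈ w.head?, lsrc s t a = x) ∧ (∀ b ∈ w.getLast?, ltgt s t b = y) ∧
      wval φ w = u := by
  induction h with
  | refl => exact ⟨[], by simp [IsWalk, List.Chain'], fun _ => rfl, by simp, by simp, rfl⟩
  | tail l h ih =>
      obtain ⟨w, hw, hnil, hhead, hlast, hval⟩ := ih
      refine ⟨w ++ [l], ?_, by simp, ?_, ?_, ?_⟩
      · rw [IsWalk, List.Chain', List.isChain_append]
        exact ⟨hw, List.isChain_singleton l, fun a ha b hb => by
          simp at hb; subst hb; exact hlast a ha⟩
      · intro a ha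
        cases w with
        | nil => simp at ha; subst ha; exact (hnil rfl).symm
        | cons l' w' => simp at ha ⊢; exact hhead a (by simp [ha])
      · intro b hb
        rw [List.getLast?_concat] at hb
        simp at hb; subst hb; rfl
      · rw [wval_eq, List.map_append, List.prod_append]
        simp [← wval_eq, hval, lval]

lemma conn_loop (hcyc : ∀ w : List (Letter A), IsCycle s t w → wval φ w = 1)
    {x : V} {u : kˣ} (h : Conn s t φ x x u) : u = 1 := by
  obtain ⟨w, hw, hnil, hhead, hlast, hval⟩ := conn_to_walk h
  cases w with
  | nil => exact hval.symm
  | cons l w' =>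
      rw [← hval]
      exact hcyc _ ⟨by simp, hw, fun a ha b hb => (hlast b hb).trans (hhead a ha).symm⟩

lemma conn_unique (hcyc : ∀ w : List (Letter A), IsCycle s t w → wval φ w = 1)
    {x y : V} {u v : kˣ} (h1 : Conn s t φ x y u) (h2 : Conn s t φ x y v) :
    u = v := by
  have := conn_loop hcyc (h1.symm.trans' h2)
  rw [mul_inv_eq_one] at this
  exact this.symm

lemma cancel_aux {G : Type} [CommGroup G] (x y z : G) :
    (x * y⁻¹) * (z * x⁻¹) = z * y⁻¹ := by
  rw [mul_comm z x⁻¹, mul_mul_mul_comm]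
  simp [mul_comm]

lemma walk_telescope (ρ : V → kˣ)
    (hl : ∀ l : Letter A, lval φ l = ρ (ltgt s t l) * (ρ (lsrc s t l))⁻¹) :
    ∀ w : List (Letter A), IsWalk s t w →
      ∀ a ∈ w.head?, ∀ b ∈ w.getLast?,
        wval φ w = ρ (ltgt s t b) * (ρ (lsrc s t a))⁻¹ := by
  intro w
  induction w with
  | nil => intro _ a ha; simp at ha
  | cons l w' ih =>
      intro hw a ha b hb
      simp at ha; subst ha
      cases w' with
      | nil =>
          simp at hb; subst hb
          rw [wval_eq]; simp [← hl]
      | cons l' w'' =>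
          rw [IsWalk, List.Chain', List.isChain_cons_cons] at hw
          have hb' : b ∈ (l' :: w'').getLast? := by
            simpa [List.getLast?_cons_cons] using hb
          have := ih hw.2 l' rfl b hb'
          rw [wval_eq, List.map_cons, List.prod_cons, ← wval_eq, this, hl l, hw.1]
          exact cancel_aux _ _ _
end Aux

variable {k : Type} [Field k] {C : Type} [Category C] [Preadditive C]
  [CategoryTheory.Linear k C]

/-- A strict `k`-linear automorphism of `C` with prescribed action `σ` on objects. -/
structure LinAutOn (k : Type) [Field k] (C : Type) [Category C] [Preadditive C]
    [CategoryTheory.Linear k C] (σ : Equiv.Perm C) where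
  map : ∀ {x y : C}, (x ⟶ y) → (σ x ⟶ σ y)
  map_id : ∀ x : C, map (𝟙 x) = 𝟙 (σ x)
  map_comp : ∀ {x y z : C} (f : x ⟶ y) (g : y ⟶ z), map (f ≫ g) = map f ≫ map g
  map_add : ∀ {x y : C} (f g : x ⟶ y), map (f + g) = map f + map g
  map_smul : ∀ {x y : C} (c : k) (f : x ⟶ y), map (c • f) = c • map f
  bij : ∀ x y : C, Function.Bijective (map (x := x) (y := y))

/-- Morphisms of `R` which are composites of the images `ᾱ` of arrows of `Q`. -/
inductive IsPathMap {Arr : Type} (src tgt : Arr → C) (bar : ∀ a : Arr, src a ⟶ tgt a) :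
    ∀ {x y : C}, (x ⟶ y) → Prop
  | id (x : C) : IsPathMap src tgt bar (𝟙 x)
  | cons (a : Arr) {y : C} (p : tgt a ⟶ y) :
      IsPathMap src tgt bar p → IsPathMap src tgt bar (bar a ≫ p)

/-- Two objects are neighbours if there is a nonzero morphism between them. -/
def Neighbour (x y : C) : Prop :=
  (∃ f : x ⟶ y, f ≠ 0) ∨ (∃ f : y ⟶ x, f ≠ 0)

/- STATEMENT 7: let `R = kQ/I` be locally bounded with ordinary quiver `Q` (arrows
`Arr`, with images `bar a` in `R` spanning all Hom-spaces by composition), and let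
`g, h` be automorphisms of `R` coinciding on objects (common object action `σ`,
morphism actions `G`, `H`; condition (2) is stated via `h(ᾱ) = c·g(ᾱ)`, which is
equivalent to `(g⁻¹h)(ᾱ) = c·ᾱ`).  Then: (1) there is `ρ : Obj(R) → kˣ` with
`ρ(y)g(f) = h(f)ρ(x)` for all `f : x ⟶ y` iff (2) there are scalars
`c_{x,y} ∈ kˣ` with `(g⁻¹h)(ᾱ) = c_{s α, t α}·ᾱ` for every arrow `α`, whose product
along every cycle of `Q` (inverting on inverse letters) equals `1`. -/
theorem stmt_7
    -- locally bounded: finite-dimensional Hom-spaces with finite support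
    (hfd : ∀ x y : C, FiniteDimensional k (x ⟶ y))
    (hsupp : ∀ x : C, {y : C | Neighbour x y}.Finite)
    -- the quiver Q of R: its arrows generate all morphisms of R
    (Arr : Type) (src tgt : Arr → C) (bar : ∀ a : Arr, src a ⟶ tgt a)
    (hgen : ∀ x y : C,
      Submodule.span k {f : x ⟶ y | IsPathMap src tgt bar f} = ⊤)
    (σ : Equiv.Perm C) (G H : LinAutOn k C σ) :
    (∃ ρ : C → kˣ, ∀ (x y : C) (f : x ⟶ y),
        (ρ y : k) • G.map f = (ρ x : k) • H.map f) ↔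
    (∃ c : C → C → kˣ,
        (∀ a : Arr, H.map (bar a) = (c (src a) (tgt a) : k) • G.map (bar a)) ∧
        (∀ w : List (Letter Arr), IsCycle src tgt w →
          wval (fun a => c (src a) (tgt a)) w = 1)) := by
  classical
  constructor
  · rintro ⟨ρ, hρ⟩
    refine ⟨fun x y => ρ y * (ρ x)⁻¹, ?_, ?_⟩
    · intro a
      have h1 := hρ (src a) (tgt a) (bar a)
      have h2 : H.map (bar a) = ((ρ (src a) : k)⁻¹ * (ρ (tgt a) : k)) • G.map (bar a) := by
        rw [mul_smul, h1, inv_smul_smul₀ (Units.ne_zero _)]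
      rw [h2]
      congr 1
      simp [mul_comm]
    · rintro w ⟨hne, hwalk, hcyc⟩
      have hl : ∀ l : Letter Arr,
          lval (fun a => ρ (tgt a) * (ρ (src a))⁻¹) l
            = ρ (ltgt src tgt l) * (ρ (lsrc src tgt l))⁻¹ := by
        rintro ⟨a, b⟩
        cases b <;> simp [lval, lsrc, ltgt, mul_inv_rev]
      cases w with
      | nil => exact absurd rfl hne
      | cons l w' =>
          obtain ⟨b, hb⟩ : ∃ b, (l :: w').getLast? = some b :=
            Option.isSome_iff_exists.mp (List.getLast?_isSome.mpr (by simp))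
          rw [walk_telescope ρ hl _ hwalk l rfl b hb, hcyc l rfl b hb]
          simp
  · rintro ⟨c, hc, hcyc⟩
    set φ : Arr → kˣ := fun a => c (src a) (tgt a) with hφ
    let st : Setoid C := ⟨fun x y => ∃ u, Conn src tgt φ x y u,
      ⟨fun x => ⟨1, Conn.refl x⟩, fun ⟨u, h⟩ => ⟨u⁻¹, h.symm⟩,
       fun ⟨u, h1⟩ ⟨v, h2⟩ => ⟨u * v, h2.trans' h1⟩⟩⟩
    have hex : ∀ x : C, ∃ u, Conn src tgt φ (Quotient.mk st x).out x u :=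
      fun x => Quotient.mk_out (s := st) x
    set ρ : C → kˣ := fun x => (hex x).choose with hρdef
    have hρ : ∀ x, Conn src tgt φ (Quotient.mk st x).out x (ρ x) :=
      fun x => (hex x).choose_spec
    have hrepeq : ∀ {x y : C}, (∃ u, Conn src tgt φ x y u) →
        (Quotient.mk st x).out = (Quotient.mk st y).out :=
      fun h => congrArg Quotient.out (Quotient.sound h)
    have step : ∀ l : Letter Arr,
        ρ (ltgt src tgt l) = ρ (lsrc src tgt l) * lval φ l := by
      intro l
      have h1 := (hρ (lsrc src tgt l)).tail l
      have e := hrepeq (x := lsrc src tgt l) (y := ltgt src tgt l)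
        ⟨1 * lval φ l, (Conn.refl _).tail l⟩
      rw [e] at h1
      exact (conn_unique hcyc h1 (hρ _)).symm
    have harr : ∀ a : Arr, ρ (tgt a) = ρ (src a) * c (src a) (tgt a) := by
      intro a
      simpa [lval, lsrc, ltgt, hφ] using step (a, true)
    have gzero : ∀ {x y : C}, G.map (0 : x ⟶ y) = 0 := by
      intro x y
      have := G.map_smul (0 : k) (0 : x ⟶ y)
      simpa using this
    have hzero : ∀ {x y : C}, H.map (0 : x ⟶ y) = 0 := by
      intro x y
      have := H.map_smul (0 : k) (0 : x ⟶ y)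
      simpa using this
    have key : ∀ (x y : C) (f : x ⟶ y), IsPathMap src tgt bar f →
        (ρ y : k) • G.map f = (ρ x : k) • H.map f := by
      intro x y f hf
      induction hf with
      | id z => rw [G.map_id, H.map_id]
      | cons a p hp ih =>
          have hck : ((ρ (tgt a) : kˣ) : k)
              = (ρ (src a) : k) * (c (src a) (tgt a) : k) := by
            rw [harr a, Units.val_mul]
          calc (ρ _ : k) • G.map (bar a ≫ p)
              = G.map (bar a) ≫ ((ρ _ : k) • G.map p) := by
                rw [G.map_comp, Linear.comp_smul]
            _ = G.map (bar a) ≫ ((ρ (tgt a) : k) • H.map p) := by rw [ih]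
            _ = ((ρ (src a) : k) * (c (src a) (tgt a) : k)) •
                  (G.map (bar a) ≫ H.map p) := by rw [Linear.comp_smul, hck]
            _ = (ρ (src a) : k) • H.map (bar a ≫ p) := by
                rw [H.map_comp, hc a, Linear.smul_comp, smul_smul]
    refine ⟨ρ, ?_⟩
    intro x y f
    have hf : f ∈ Submodule.span k {f : x ⟶ y | IsPathMap src tgt bar f} := by
      rw [hgen]; exact Submodule.mem_top
    induction hf using Submodule.span_induction with
    | mem f hf => exact key x y f hf
    | zero => simp [gzero, hzero]
    | add f g hf hg ihf ihg =>
        rw [G.map_add, H.map_add, smul_add, smul_add, ihf, ihg]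
    | smul r f hf ih =>
        rw [G.map_smul, H.map_smul, smul_comm ((ρ y : kˣ) : k) r, ih, smul_comm]
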